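/- Let π be a measure on a measurable space E, let B ⊆ E be measurable with 0 < π(B) < ∞, and let A₁, …, A_n ⊆ B be pairwise disjoint measurable sets with π(A_i) > 0 for each i ∈ {1, …, n}. Let a₁, …, a_n ≥ 0 satisfy Σ_{i=1}^n a_i = 1, and set ν_i := π(A_i)/π(B). Then the total variation distance between the mixture Σ_{i=1}^n a_i π^{A_i} and the conditioned measure π^B equals Σ over those i with a_i > ν_i of (a_i − ν_i); that is, sup over measurable F ⊆ E of |Σ_{i=1}^n a_i π^{A_i}(F) − π^B(F)| = Σ_{i : a_i > ν_i} (a_i − ν_i). -/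

import Mathlib

open MeasureTheory Finset

/-- The value on the set `S` of the measure `π` conditioned on `A`:
`π^A(S) = π(S ∩ A) / π(A)`. -/
noncomputable def condMeas {E : Type*} [MeasurableSpace E]
    (π : Measure E) (A S : Set E) : ℝ :=
  (π (S ∩ A)).toReal / (π A).toReal

/-- The total variation distance between a mixture `Σᵢ aᵢ π^{Aᵢ}` of conditioned
measures and the conditioned measure `π^B`, where the `Aᵢ ⊆ B` are pairwise
disjoint, equals `Σ_{i : aᵢ > νᵢ} (aᵢ − νᵢ)` with `νᵢ = π(Aᵢ)/π(B)`. -/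
lemma aux_sum_le {n : ℕ} (a ν p : Fin n → ℝ) (hp0 : ∀ i, 0 ≤ p i) (hp1 : ∀ i, p i ≤ 1) :
    ∑ i, (a i - ν i) * p i ≤ ∑ i ∈ Finset.univ.filter (fun i => ν i < a i), (a i - ν i) := by
  rw [← Finset.sum_filter_add_sum_filter_not Finset.univ (fun i => ν i < a i)
    (fun i => (a i - ν i) * p i)]
  have h1 : ∑ i ∈ Finset.univ.filter (fun i => ν i < a i), (a i - ν i) * p i
      ≤ ∑ i ∈ Finset.univ.filter (fun i => ν i < a i), (a i - ν i) := by
    refine Finset.sum_le_sum fun i hi => ?_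
    have := (Finset.mem_filter.mp hi).2
    exact mul_le_of_le_one_right (by linarith) (hp1 i)
  have h2 : ∑ i ∈ Finset.univ.filter (fun i => ¬ ν i < a i), (a i - ν i) * p i ≤ 0 := by
    refine Finset.sum_nonpos fun i hi => ?_
    have := (Finset.mem_filter.mp hi).2
    exact mul_nonpos_of_nonpos_of_nonneg (by push_neg at this; linarith) (hp0 i)
  linarith

theorem dTV_mixture_cond {E : Type*} [MeasurableSpace E]
    (π : Measure E) (B : Set E) (hB : MeasurableSet B)
    (hBpos : 0 < π B) (hBfin : π B < ⊤)
    (n : ℕ) (A : Fin n → Set E)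
    (hAmeas : ∀ i, MeasurableSet (A i))
    (hAB : ∀ i, A i ⊆ B)
    (hAdisj : Pairwise (Function.onFun Disjoint A))
    (hApos : ∀ i, 0 < π (A i))
    (a : Fin n → ℝ) (ha : ∀ i, 0 ≤ a i) (hasum : ∑ i, a i = 1) :
    (⨆ F : {F : Set E // MeasurableSet F},
        |(∑ i, a i * condMeas π (A i) F.1) - condMeas π B F.1|)
      = ∑ i ∈ Finset.univ.filter
          (fun i => (π (A i)).toReal / (π B).toReal < a i),
          (a i - (π (A i)).toReal / (π B).toReal) := by
  set b : ℝ := (π B).toReal with hb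
  set m : Fin n → ℝ := fun i => (π (A i)).toReal with hm
  set ν : Fin n → ℝ := fun i => m i / b with hν
  set P : ℝ := ∑ i ∈ Finset.univ.filter (fun i => ν i < a i), (a i - ν i) with hP
  have hbpos : 0 < b := ENNReal.toReal_pos hBpos.ne' hBfin.ne
  have hAfin : ∀ i, π (A i) < ⊤ := fun i => lt_of_le_of_lt (measure_mono (hAB i)) hBfin
  have hmpos : ∀ i, 0 < m i := fun i => ENNReal.toReal_pos (hApos i).ne' (hAfin i).ne
  -- upper bound for every measurable F
  have key : ∀ F : Set E, MeasurableSet F →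
      |(∑ i, a i * condMeas π (A i) F) - condMeas π B F| ≤ P := by
    intro F hF
    set q : Fin n → ℝ := fun i => (π (F ∩ A i)).toReal with hqdef
    set p : Fin n → ℝ := fun i => q i / m i with hpdef
    have hqfin : ∀ i, π (F ∩ A i) < ⊤ :=
      fun i => lt_of_le_of_lt (measure_mono Set.inter_subset_right) (hAfin i)
    have hq0 : ∀ i, 0 ≤ q i := fun i => ENNReal.toReal_nonneg
    have hqm : ∀ i, q i ≤ m i := fun i =>
      ENNReal.toReal_mono (hAfin i).ne (measure_mono Set.inter_subset_right)
    have hp0 : ∀ i, 0 ≤ p i := fun i => div_nonneg (hq0 i) (hmpos i).le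
    have hp1 : ∀ i, p i ≤ 1 := fun i => (div_le_one (hmpos i)).mpr (hqm i)
    have hmp : ∀ i, m i * p i = q i := fun i => by
      rw [hpdef, mul_comm]; exact div_mul_cancel₀ _ (hmpos i).ne'
    have hFBfin : π (F ∩ B) < ⊤ := lt_of_le_of_lt (measure_mono Set.inter_subset_right) hBfin
    set r : ℝ := (π (F ∩ B)).toReal with hr
    -- claim (i) : ∑ q ≤ r
    have hdisjFA : Pairwise (Function.onFun Disjoint (fun i => F ∩ A i)) := by
      intro i j hij
      exact (hAdisj hij).mono Set.inter_subset_right Set.inter_subset_right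
    have hunion : π (⋃ i, F ∩ A i) = ∑ i, π (F ∩ A i) := by
      rw [measure_iUnion hdisjFA (fun i => hF.inter (hAmeas i)), tsum_fintype]
    have hsum_le : ∑ i, π (F ∩ A i) ≤ π (F ∩ B) := by
      rw [← hunion]
      refine measure_mono (Set.iUnion_subset fun i => ?_)
      exact Set.inter_subset_inter_right F (hAB i)
    have claim1 : ∑ i, q i ≤ r := by
      have := ENNReal.toReal_mono hFBfin.ne hsum_le
      rwa [ENNReal.toReal_sum (fun i _ => (hqfin i).ne)] at this
    -- claim (ii) : r ≤ b - ∑ m + ∑ q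
    have hsplit : ∀ i, π (F ∩ A i) + π (A i \ F) = π (A i) := by
      intro i
      rw [Set.inter_comm]
      exact measure_inter_add_diff (A i) hF
    have hdfin : ∀ i, π (A i \ F) < ⊤ :=
      fun i => lt_of_le_of_lt (measure_mono Set.diff_subset) (hAfin i)
    have hdval : ∀ i, (π (A i \ F)).toReal = m i - q i := by
      intro i
      have h2 : (π (F ∩ A i)).toReal + (π (A i \ F)).toReal = m i := by
        rw [← ENNReal.toReal_add (hqfin i).ne (hdfin i).ne, hsplit i]
      have : q i = (π (F ∩ A i)).toReal := rfl
      linarith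
    have hdisjd : Pairwise (Function.onFun Disjoint (fun i => A i \ F)) := by
      intro i j hij
      exact (hAdisj hij).mono Set.diff_subset Set.diff_subset
    have claim2 : r ≤ b - ∑ i, m i + ∑ i, q i := by
      have hdisjFB : Disjoint (F ∩ B) (⋃ i, A i \ F) := by
        refine Set.disjoint_iUnion_right.mpr fun i => ?_
        exact Disjoint.mono Set.inter_subset_left le_rfl disjoint_sdiff_self_right
      have hsub : (F ∩ B) ∪ (⋃ i, A i \ F) ⊆ B := by
        refine Set.union_subset Set.inter_subset_right (Set.iUnion_subset fun i => ?_)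
        exact Set.diff_subset.trans (hAB i)
      have h1 : π (F ∩ B) + π (⋃ i, A i \ F) ≤ π B := by
        rw [← measure_union hdisjFB (MeasurableSet.iUnion fun i => (hAmeas i).diff hF)]
        exact measure_mono hsub
      rw [measure_iUnion hdisjd (fun i => (hAmeas i).diff hF), tsum_fintype] at h1
      have h2 := ENNReal.toReal_mono hBfin.ne h1
      rw [ENNReal.toReal_add hFBfin.ne (by
          rw [← tsum_fintype (L := SummationFilter.unconditional _), ← measure_iUnion hdisjd (fun i => (hAmeas i).diff hF)]
          exact (lt_of_le_of_lt (measure_mono (Set.iUnion_subset fun i =>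
            Set.diff_subset.trans (hAB i))) hBfin).ne),
        ENNReal.toReal_sum (fun i _ => (hdfin i).ne)] at h2
      have h3 : ∑ i, (π (A i \ F)).toReal = ∑ i, m i - ∑ i, q i := by
        rw [← Finset.sum_sub_distrib]
        exact Finset.sum_congr rfl fun i _ => hdval i
      rw [h3] at h2
      linarith
    -- rewrite condMeas values
    have hcond : ∀ i, condMeas π (A i) F = p i := fun i => rfl
    have hcondB : condMeas π B F = r / b := rfl
    simp only [hcond, hcondB]
    rw [abs_le]
    have hνp_eq : ∑ i, ν i * p i = (∑ i, q i) / b := by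
      rw [Finset.sum_div]
      refine Finset.sum_congr rfl fun i _ => ?_
      show m i / b * p i = q i / b
      rw [div_mul_eq_mul_div, hmp i]
    have hν_eq : ∑ i, ν i = (∑ i, m i) / b := by
      rw [Finset.sum_div]
    constructor
    · -- r/b - ∑ a p ≤ P
      have haux := aux_sum_le a ν (fun i => 1 - p i)
        (fun i => by linarith [hp1 i]) (fun i => by linarith [hp0 i])
      have hexp : ∑ i, (a i - ν i) * (1 - p i)
          = ∑ i, a i - ∑ i, a i * p i - ∑ i, ν i + ∑ i, ν i * p i := by
        rw [← Finset.sum_sub_distrib, ← Finset.sum_sub_distrib, ← Finset.sum_add_distrib]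
        exact Finset.sum_congr rfl fun i _ => by ring
      have hrb : r / b ≤ (b - ∑ i, m i + ∑ i, q i) / b := (div_le_div_iff_of_pos_right hbpos).mpr claim2
      have hsplitdiv : (b - ∑ i, m i + ∑ i, q i) / b
          = 1 - (∑ i, m i) / b + (∑ i, q i) / b := by
        rw [add_div, sub_div, div_self hbpos.ne']
      rw [hsplitdiv] at hrb
      linarith [haux, hexp, hasum, hν_eq, hνp_eq]
    · -- ∑ a p - r/b ≤ P
      have haux := aux_sum_le a ν p hp0 hp1
      have hexp : ∑ i, (a i - ν i) * p i = ∑ i, a i * p i - ∑ i, ν i * p i := by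
        rw [← Finset.sum_sub_distrib]
        exact Finset.sum_congr rfl fun i _ => by ring
      have hqb : (∑ i, q i) / b ≤ r / b := (div_le_div_iff_of_pos_right hbpos).mpr claim1
      linarith [haux, hexp, hνp_eq]
  -- attainment
  set S : Finset (Fin n) := Finset.univ.filter (fun i => ν i < a i) with hS
  set F₀ : Set E := ⋃ i ∈ S, A i with hF₀
  have hF₀meas : MeasurableSet F₀ :=
    MeasurableSet.iUnion fun i => MeasurableSet.iUnion fun _ => hAmeas i
  have hF₀B : F₀ ⊆ B := Set.iUnion₂_subset fun i _ => hAB i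
  have hsubj : ∀ j, j ∈ S → A j ⊆ F₀ := by
    intro j hj
    rw [hF₀]
    exact Set.subset_iUnion₂ (s := fun i _ => A i) j hj
  have h1 : ∀ j, j ∈ S → F₀ ∩ A j = A j := fun j hj =>
    Set.inter_eq_right.mpr (hsubj j hj)
  have h2 : ∀ j, j ∉ S → F₀ ∩ A j = ∅ := by
    intro j hj
    refine Set.eq_empty_iff_forall_notMem.mpr fun x hx => ?_
    obtain ⟨hxF, hxA⟩ := hx
    simp only [hF₀, Set.mem_iUnion] at hxF
    obtain ⟨i, hiS, hxAi⟩ := hxF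
    have hij : i ≠ j := fun h => hj (h ▸ hiS)
    exact Set.disjoint_left.mp (hAdisj hij) hxAi hxA
  have hc : ∀ j, condMeas π (A j) F₀ = if j ∈ S then 1 else 0 := by
    intro j
    by_cases hj : j ∈ S
    · simp only [hj, if_true, condMeas, h1 j hj]
      exact div_self (hmpos j).ne'
    · simp [condMeas, h2 j hj, hj]
  have hmix : ∑ i, a i * condMeas π (A i) F₀ = ∑ i ∈ S, a i := by
    rw [Finset.sum_congr rfl fun i _ => by rw [hc i]]
    simp [Finset.sum_ite_mem, mul_comm]
  have hcB : condMeas π B F₀ = ∑ i ∈ S, ν i := by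
    have hFB : F₀ ∩ B = F₀ := Set.inter_eq_left.mpr hF₀B
    have hμ : π F₀ = ∑ i ∈ S, π (A i) := by
      rw [hF₀]
      exact measure_biUnion_finset (fun i _ j _ hij => hAdisj hij) (fun i _ => hAmeas i)
    show (π (F₀ ∩ B)).toReal / b = _
    rw [hFB, hμ, ENNReal.toReal_sum (fun i _ => (hAfin i).ne), Finset.sum_div]
  have hval : |(∑ i, a i * condMeas π (A i) F₀) - condMeas π B F₀| = P := by
    rw [hmix, hcB, ← Finset.sum_sub_distrib]
    have : ∑ i ∈ S, (a i - ν i) = P := rfl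
    rw [this]
    exact abs_of_nonneg (Finset.sum_nonneg fun i hi => by
      have := (Finset.mem_filter.mp hi).2; linarith)
  have hbdd : BddAbove (Set.range fun F : {F : Set E // MeasurableSet F} =>
      |(∑ i, a i * condMeas π (A i) F.1) - condMeas π B F.1|) := by
    refine ⟨P, ?_⟩
    rintro x ⟨F, rfl⟩
    exact key F.1 F.2
  refine le_antisymm (ciSup_le fun F => key F.1 F.2) ?_
  calc P = |(∑ i, a i * condMeas π (A i) F₀) - condMeas π B F₀| := hval.symm
    _ ≤ _ := le_ciSup hbdd ⟨F₀, hF₀meas⟩
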